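/- Let D be a conjunction of possibly negated atomic formulas of a first-order signature such that every variable occurring in D occurs in some non-negated conjunct of the form x = t or t = x, and such that the variable dependency graph of D is acyclic. Then the substitution process that, while some variable x remains in D, selects a non-negated conjunct x = t or t = x of D such that no variable occurring in t depends on x and replaces D by D^x_t (the result of substituting t for every occurrence of x in D), terminates after finitely many steps in a formula containing no variables, and the existential closure of D is logically equivalent to the resulting variable-free formula. -/

import Mathlib

/-!
A deep embedding of (one-sorted) first-order logic with equality,
following the functional stable model semantics of
Bartholomew & Lee, used by the ASPMT / aspsmt2smt paper.
-/

namespace ASPMT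

/-- A first-order signature: function symbols and predicate symbols with arities. -/
structure Signature where
  Func : Type
  Pred : Type
  funcAr : Func → ℕ
  predAr : Pred → ℕ

variable {σ : Signature}

/-- First-order terms; variables are indexed by natural numbers. -/
inductive Term (σ : Signature) : Type
  | var : ℕ → Term σ
  | app : (f : σ.Func) → (Fin (σ.funcAr f) → Term σ) → Term σ

/-- First-order formulas (with equality). `¬F` is `F.imp falsum`. -/
inductive Formula (σ : Signature) : Type
  | falsum : Formula σ
  | eq : Term σ → Term σ → Formula σ
  | pred : (p : σ.Pred) → (Fin (σ.predAr p) → Term σ) → Formula σ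
  | and : Formula σ → Formula σ → Formula σ
  | or : Formula σ → Formula σ → Formula σ
  | imp : Formula σ → Formula σ → Formula σ
  | all : ℕ → Formula σ → Formula σ
  | ex : ℕ → Formula σ → Formula σ

/-- Negation, as an abbreviation. -/
def Formula.not (F : Formula σ) : Formula σ := F.imp .falsum

/-- An interpretation (structure) for the signature, with nonempty universe. -/
structure Interp (σ : Signature) where
  M : Type
  nonempty : Nonempty M
  funcI : (f : σ.Func) → (Fin (σ.funcAr f) → M) → M
  predI : (p : σ.Pred) → (Fin (σ.predAr p) → M) → Prop

/-- Updating a variable assignment at a variable. -/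
def updAssign {α : Type} (ν : ℕ → α) (x : ℕ) (a : α) : ℕ → α :=
  fun y => if y = x then a else ν y

/-- Evaluation of a term in an interpretation under a variable assignment. -/
def Term.eval (I : Interp σ) (ν : ℕ → I.M) : Term σ → I.M
  | .var x => ν x
  | .app f ts => I.funcI f fun i => (ts i).eval I ν

/-- Tarskian satisfaction. -/
def Formula.Sat (I : Interp σ) : (ν : ℕ → I.M) → Formula σ → Prop
  | _, .falsum => False
  | ν, .eq t u => t.eval I ν = u.eval I ν
  | ν, .pred p ts => I.predI p fun i => (ts i).eval I ν
  | ν, .and F G => F.Sat I ν ∧ G.Sat I ν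
  | ν, .or F G => F.Sat I ν ∨ G.Sat I ν
  | ν, .imp F G => F.Sat I ν → G.Sat I ν
  | ν, .all x F => ∀ a : I.M, F.Sat I (updAssign ν x a)
  | ν, .ex x F => ∃ a : I.M, F.Sat I (updAssign ν x a)

/-- Variables occurring in a term. -/
def Term.vars : Term σ → Set ℕ
  | .var x => {x}
  | .app _ ts => ⋃ i, (ts i).vars

/-- Free variables of a formula. -/
def Formula.fv : Formula σ → Set ℕ
  | .falsum => ∅
  | .eq t u => t.vars ∪ u.vars
  | .pred _ ts => ⋃ i, (ts i).vars
  | .and F G => F.fv ∪ G.fv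
  | .or F G => F.fv ∪ G.fv
  | .imp F G => F.fv ∪ G.fv
  | .all x F => F.fv \ {x}
  | .ex x F => F.fv \ {x}

end ASPMT


namespace ASPMT

variable {σ : Signature}

/-- Substitution of a term `t` for a variable `x` in a term. -/
def Term.subst : Term σ → ℕ → Term σ → Term σ
  | .var y, x, t => if y = x then t else .var y
  | .app f ts, x, t => .app f fun i => (ts i).subst x t

/-- Atomic formulas. -/
inductive Atom (σ : Signature) : Type
  | eq : Term σ → Term σ → Atom σ
  | pred : (p : σ.Pred) → (Fin (σ.predAr p) → Term σ) → Atom σ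

/-- A literal: an atomic formula, possibly preceded with `¬` (`pos = false`). -/
structure Lit (σ : Signature) where
  atom : Atom σ
  pos : Bool

/-- A conjunction `C₁ ∧ … ∧ Cₙ` of possibly negated atomic formulas. -/
abbrev Conj (σ : Signature) := List (Lit σ)

/-- Variables occurring in an atomic formula. -/
def Atom.vars : Atom σ → Set ℕ
  | .eq t u => t.vars ∪ u.vars
  | .pred _ ts => ⋃ i, (ts i).vars

/-- Variables occurring in a literal. -/
def Lit.vars (l : Lit σ) : Set ℕ := l.atom.vars

/-- Variables occurring in a conjunction of literals. -/
def conjVars (L : Conj σ) : Set ℕ := {x | ∃ l ∈ L, x ∈ l.vars}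

/-- Substitution in an atomic formula. -/
def Atom.subst : Atom σ → ℕ → Term σ → Atom σ
  | .eq a b, x, t => .eq (a.subst x t) (b.subst x t)
  | .pred p ts, x, t => .pred p fun i => (ts i).subst x t

/-- Substitution in a literal. -/
def Lit.subst (l : Lit σ) (x : ℕ) (t : Term σ) : Lit σ := ⟨l.atom.subst x t, l.pos⟩

/-- `D^x_t`: the result of substituting `t` for every occurrence of the variable
`x` in the conjunction `D`. -/
def conjSubst (x : ℕ) (t : Term σ) (L : Conj σ) : Conj σ := L.map (Lit.subst · x t)

/-- The literal `l` is a non-negated conjunct of the form `x = t` or `t = x`. -/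
def isolator (x : ℕ) (l : Lit σ) : Prop :=
  l.pos = true ∧ ∃ t : Term σ, l.atom = .eq (.var x) t ∨ l.atom = .eq t (.var x)

/-- The edge relation of the variable dependency graph of a conjunction `L`:
there is an edge from `v` to `u` if some conjunct of `L` is `v = t` or `t = v`
for a term `t` in which `u` appears. -/
def depEdgeC (L : Conj σ) (v u : ℕ) : Prop :=
  ∃ l ∈ L, l.pos = true ∧ ∃ t : Term σ,
    (l.atom = .eq (.var v) t ∨ l.atom = .eq t (.var v)) ∧ u ∈ t.vars

/-- `v` depends on `u`: there is a directed path (of length ≥ 1) from `v` to `u`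
in the variable dependency graph of `L`. -/
def dependsOn (L : Conj σ) : ℕ → ℕ → Prop := Relation.TransGen (depEdgeC L)

/-- The variable dependency graph of `L` is acyclic. -/
def AcyclicDeps (L : Conj σ) : Prop := ∀ v, ¬ dependsOn L v v

/-- One step of the substitution process: select a variable `x` still occurring in
`L` and a non-negated conjunct `x = t` or `t = x` of `L` such that no variable
occurring in `t` depends on `x`, and replace `L` by `L^x_t`. -/
def SubstStep (L L' : Conj σ) : Prop :=
  ∃ x ∈ conjVars L, ∃ t : Term σ,
    (∃ l ∈ L, l.pos = true ∧ (l.atom = .eq (.var x) t ∨ l.atom = .eq t (.var x))) ∧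
    (∀ u ∈ t.vars, ¬ dependsOn L u x) ∧
    L' = conjSubst x t L

/-- Satisfaction of an atomic formula. -/
def Atom.SatA (I : Interp σ) (ν : ℕ → I.M) : Atom σ → Prop
  | .eq t u => t.eval I ν = u.eval I ν
  | .pred p ts => I.predI p fun i => (ts i).eval I ν

/-- Satisfaction of a literal. -/
def Lit.SatL (I : Interp σ) (ν : ℕ → I.M) (l : Lit σ) : Prop :=
  if l.pos then l.atom.SatA I ν else ¬ l.atom.SatA I ν

/-- Satisfaction of a conjunction of literals. -/
def SatConj (I : Interp σ) (ν : ℕ → I.M) (L : Conj σ) : Prop :=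
  ∀ l ∈ L, l.SatL I ν

end ASPMT

namespace ASPMT

variable {σ : Signature}

lemma Term.vars_finite (t : Term σ) : t.vars.Finite := by
  induction t with
  | var x => simp [Term.vars]
  | app f ts ih => exact Set.finite_iUnion ih

lemma conjVars_eq (L : Conj σ) : conjVars L = ⋃ l ∈ {l | l ∈ L}, l.vars := by
  ext x; simp [conjVars]

lemma conjVars_finite (L : Conj σ) : (conjVars L).Finite := by
  rw [conjVars_eq]
  exact Set.Finite.biUnion (L.finite_toSet) fun l _ => by
    cases h : l.atom with
    | eq a b => simpa [Lit.vars, Atom.vars, h] using (a.vars_finite.union b.vars_finite)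
    | pred p ts => simpa [Lit.vars, Atom.vars, h] using Set.finite_iUnion fun i => (ts i).vars_finite

lemma Term.eval_congr {I : Interp σ} {ν₁ ν₂ : ℕ → I.M} (t : Term σ)
    (h : ∀ x ∈ t.vars, ν₁ x = ν₂ x) : t.eval I ν₁ = t.eval I ν₂ := by
  induction t with
  | var x => exact h x (by simp [Term.vars])
  | app f ts ih =>
    simp only [Term.eval]
    congr 1
    funext i
    exact ih i fun x hx => h x (by simp [Term.vars]; exact ⟨i, hx⟩)

lemma Term.subst_eval {I : Interp σ} (a : Term σ) (x : ℕ) (t : Term σ) (ν : ℕ → I.M) :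
    (a.subst x t).eval I ν = a.eval I (updAssign ν x (t.eval I ν)) := by
  induction a with
  | var y => by_cases h : y = x <;> simp [Term.subst, Term.eval, updAssign, h]
  | app f ts ih => simp only [Term.subst, Term.eval]; congr 1; funext i; exact ih i

lemma Atom.subst_sat {I : Interp σ} (a : Atom σ) (x : ℕ) (t : Term σ) (ν : ℕ → I.M) :
    (a.subst x t).SatA I ν ↔ a.SatA I (updAssign ν x (t.eval I ν)) := by
  cases a with
  | eq u v => simp [Atom.subst, Atom.SatA, Term.subst_eval]
  | pred p ts => simp [Atom.subst, Atom.SatA, Term.subst_eval]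

lemma SatConj_subst {I : Interp σ} (L : Conj σ) (x : ℕ) (t : Term σ) (ν : ℕ → I.M) :
    SatConj I ν (conjSubst x t L) ↔ SatConj I (updAssign ν x (t.eval I ν)) L := by
  unfold SatConj conjSubst
  constructor
  · intro h l hl
    have := h (l.subst x t) (List.mem_map_of_mem (f := (Lit.subst · x t)) hl)
    simpa [Lit.SatL, Lit.subst, Atom.subst_sat] using this
  · intro h l hl
    rcases List.mem_map.1 hl with ⟨l₀, hl₀, rfl⟩
    have := h l₀ hl₀
    simpa [Lit.SatL, Lit.subst, Atom.subst_sat] using this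

lemma Term.mem_vars_subst {a : Term σ} {x u : ℕ} {t : Term σ} :
    u ∈ (a.subst x t).vars ↔ (u ∈ a.vars ∧ u ≠ x) ∨ (x ∈ a.vars ∧ u ∈ t.vars) := by
  induction a with
  | var y =>
    by_cases h : y = x
    · subst h
      simp only [Term.subst, if_pos rfl, Term.vars, Set.mem_singleton_iff]
      constructor
      · intro hu; exact Or.inr ⟨trivial, hu⟩
      · rintro (⟨rfl, hne⟩ | ⟨-, hu⟩)
        · exact absurd rfl hne
        · exact hu
    · simp only [Term.subst, if_neg h, Term.vars, Set.mem_singleton_iff]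
      constructor
      · rintro rfl; exact Or.inl ⟨rfl, h⟩
      · rintro (⟨rfl, -⟩ | ⟨hxy, -⟩)
        · rfl
        · exact absurd hxy.symm h
  | app f ts ih =>
    simp only [Term.subst, Term.vars, Set.mem_iUnion, ih]
    constructor
    · rintro ⟨i, (⟨h1, h2⟩ | ⟨h1, h2⟩)⟩
      · exact Or.inl ⟨⟨i, h1⟩, h2⟩
      · exact Or.inr ⟨⟨i, h1⟩, h2⟩
    · rintro (⟨⟨i, h1⟩, h2⟩ | ⟨⟨i, h1⟩, h2⟩)
      · exact ⟨i, Or.inl ⟨h1, h2⟩⟩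
      · exact ⟨i, Or.inr ⟨h1, h2⟩⟩

lemma Atom.mem_vars_subst {a : Atom σ} {x u : ℕ} {t : Term σ} :
    u ∈ (a.subst x t).vars ↔ (u ∈ a.vars ∧ u ≠ x) ∨ (x ∈ a.vars ∧ u ∈ t.vars) := by
  cases a with
  | eq b c =>
    simp only [Atom.subst, Atom.vars, Set.mem_union, Term.mem_vars_subst]
    tauto
  | pred p ts =>
    simp only [Atom.subst, Atom.vars, Set.mem_iUnion, Term.mem_vars_subst]
    constructor
    · rintro ⟨i, (⟨h1, h2⟩ | ⟨h1, h2⟩)⟩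
      · exact Or.inl ⟨⟨i, h1⟩, h2⟩
      · exact Or.inr ⟨⟨i, h1⟩, h2⟩
    · rintro (⟨⟨i, h1⟩, h2⟩ | ⟨⟨i, h1⟩, h2⟩)
      · exact ⟨i, Or.inl ⟨h1, h2⟩⟩
      · exact ⟨i, Or.inr ⟨h1, h2⟩⟩

/-- In a valid step, `x` does not occur in `t`. -/
lemma step_x_not_in_t {L : Conj σ} {x : ℕ} {t : Term σ}
    (hconj : ∃ l ∈ L, l.pos = true ∧ (l.atom = .eq (.var x) t ∨ l.atom = .eq t (.var x)))
    (hdep : ∀ u ∈ t.vars, ¬ dependsOn L u x) : x ∉ t.vars := by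
  intro hx
  rcases hconj with ⟨l, hl, hpos, hform⟩
  exact hdep x hx (Relation.TransGen.single ⟨l, hl, hpos, t, hform, hx⟩)

lemma t_vars_in_L {L : Conj σ} {x : ℕ} {t : Term σ}
    (hconj : ∃ l ∈ L, l.pos = true ∧ (l.atom = .eq (.var x) t ∨ l.atom = .eq t (.var x))) :
    t.vars ⊆ conjVars L := by
  rcases hconj with ⟨l, hl, _, hform⟩
  intro u hu
  refine ⟨l, hl, ?_⟩
  rcases hform with h | h <;> simp [Lit.vars, h, Atom.vars] <;> tauto

lemma x_in_conjVars {L : Conj σ} {x : ℕ} {t : Term σ}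
    (hconj : ∃ l ∈ L, l.pos = true ∧ (l.atom = .eq (.var x) t ∨ l.atom = .eq t (.var x))) :
    x ∈ conjVars L := by
  rcases hconj with ⟨l, hl, _, hform⟩
  refine ⟨l, hl, ?_⟩
  rcases hform with h | h <;> simp [Lit.vars, h, Atom.vars, Term.vars]

lemma conjVars_step_subset {L L' : Conj σ} (h : SubstStep L L') :
    ∃ x ∈ conjVars L, conjVars L' ⊆ conjVars L \ {x} := by
  rcases h with ⟨x, hx, t, hconj, hdep, rfl⟩
  have hxt : x ∉ t.vars := step_x_not_in_t hconj hdep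
  have htL : t.vars ⊆ conjVars L := t_vars_in_L hconj
  refine ⟨x, hx, ?_⟩
  rintro u ⟨l', hl', hu⟩
  rcases List.mem_map.1 hl' with ⟨l, hl, rfl⟩
  have hu' : u ∈ (l.atom.subst x t).vars := hu
  rcases Atom.mem_vars_subst.1 hu' with ⟨h1, h2⟩ | ⟨h1, h2⟩
  · exact ⟨⟨l, hl, h1⟩, h2⟩
  · exact ⟨htL h2, fun he => hxt (he ▸ h2)⟩

/-- If substitution turns a term into a variable. -/
lemma Term.subst_eq_var {c : Term σ} {x v : ℕ} {t : Term σ}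
    (h : c.subst x t = Term.var v) :
    (c = Term.var v ∧ v ≠ x) ∨ (c = Term.var x ∧ t = Term.var v) := by
  cases c with
  | var y =>
    by_cases hy : y = x
    · subst hy; simp [Term.subst] at h; exact Or.inr ⟨rfl, h⟩
    · simp [Term.subst, hy] at h
      exact Or.inl ⟨by rw [h], fun he => hy (h.symm ▸ he)⟩
  | app f ts => simp [Term.subst] at h

lemma depEdge_subst_aux {L : Conj σ} {x : ℕ} {t : Term σ}
    {l₀ : Lit σ} (hl₀ : l₀ ∈ L) (hpos₀ : l₀.pos = true)
    (hform₀ : l₀.atom = .eq (.var x) t ∨ l₀.atom = .eq t (.var x))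
    (hdep : ∀ u ∈ t.vars, ¬ dependsOn L u x)
    {l : Lit σ} (hl : l ∈ L) (hpos : l.pos = true)
    {c d : Term σ} (hor : l.atom = .eq c d ∨ l.atom = .eq d c)
    {v u : ℕ} (hc : c.subst x t = Term.var v) (hu : u ∈ (d.subst x t).vars) :
    dependsOn L v u := by
  have edge_x : ∀ w ∈ t.vars, depEdgeC L x w :=
    fun w hw => ⟨l₀, hl₀, hpos₀, t, hform₀, hw⟩
  rcases Term.subst_eq_var hc with ⟨rfl, hvx⟩ | ⟨rfl, rfl⟩
  · -- c = .var v, genuine source in L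
    have edge_v : ∀ w ∈ d.vars, depEdgeC L v w := by
      intro w hw
      refine ⟨l, hl, hpos, d, ?_, hw⟩
      rcases hor with h | h
      · exact Or.inl h
      · exact Or.inr h
    rcases Term.mem_vars_subst.1 hu with ⟨h1, _⟩ | ⟨h1, h2⟩
    · exact Relation.TransGen.single (edge_v u h1)
    · exact Relation.TransGen.head (edge_v x h1) (Relation.TransGen.single (edge_x u h2))
  · -- c = .var x, t = .var v : contradicts the step condition
    exfalso
    have hvt : v ∈ (Term.var v : Term σ).vars := by simp [Term.vars]
    refine hdep v hvt (Relation.TransGen.single ?_)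
    refine ⟨l₀, hl₀, hpos₀, Term.var x, ?_, by simp [Term.vars]⟩
    rcases hform₀ with h | h
    · exact Or.inr h
    · exact Or.inl h

/-- Edges of the substituted conjunction are paths in the original. -/
lemma depEdge_subst {L : Conj σ} {x : ℕ} {t : Term σ}
    (hconj : ∃ l ∈ L, l.pos = true ∧ (l.atom = .eq (.var x) t ∨ l.atom = .eq t (.var x)))
    (hdep : ∀ u ∈ t.vars, ¬ dependsOn L u x)
    {v u : ℕ} (h : depEdgeC (conjSubst x t L) v u) : dependsOn L v u := by
  rcases hconj with ⟨l₀, hl₀, hpos₀, hform₀⟩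
  rcases h with ⟨l', hl', hpos, s, hform, hus⟩
  rcases List.mem_map.1 hl' with ⟨l, hl, rfl⟩
  cases hatom : l.atom with
  | pred p ts =>
    exfalso
    rcases hform with h | h <;> simp [Lit.subst, hatom, Atom.subst] at h
  | eq a b =>
    have hpos' : l.pos = true := hpos
    rcases hform with h | h <;>
      simp only [Lit.subst, hatom, Atom.subst, Atom.eq.injEq] at h
    · exact depEdge_subst_aux hl₀ hpos₀ hform₀ hdep hl hpos' (Or.inl hatom) h.1
        (h.2 ▸ hus)
    · exact depEdge_subst_aux hl₀ hpos₀ hform₀ hdep hl hpos' (Or.inr hatom) h.2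
        (h.1 ▸ hus)

/-- Acyclicity is preserved by a substitution step. -/
lemma acyclic_step {L L' : Conj σ} (h : SubstStep L L') (hacyc : AcyclicDeps L) :
    AcyclicDeps L' := by
  rcases h with ⟨x, hx, t, hconj, hdep, rfl⟩
  intro v hv
  have : dependsOn L v v := by
    have mono : ∀ a b, dependsOn (conjSubst x t L) a b → dependsOn L a b := by
      intro a b hab
      induction hab with
      | single he => exact depEdge_subst hconj hdep he
      | tail _ he ih => exact ih.trans (depEdge_subst hconj hdep he)
    exact mono v v hv
  exact hacyc v this

/-- Isolators are preserved by a substitution step. -/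
lemma iso_step {L L' : Conj σ} (h : SubstStep L L')
    (hiso : ∀ y ∈ conjVars L, ∃ l ∈ L, isolator y l) :
    ∀ y ∈ conjVars L', ∃ l ∈ L', isolator y l := by
  obtain ⟨x, hx, hsub⟩ := conjVars_step_subset h
  rcases h with ⟨x', hx', t, hconj, hdep, rfl⟩
  intro y hy
  obtain ⟨hyL, hynx⟩ := hsub hy
  -- also y ≠ x' since x' is eliminated
  have hxt : x' ∉ t.vars := step_x_not_in_t hconj hdep
  have hynx' : y ≠ x' := by
    rintro rfl
    rcases hy with ⟨l', hl', hu⟩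
    rcases List.mem_map.1 hl' with ⟨l, hl, rfl⟩
    rcases Atom.mem_vars_subst.1 hu with ⟨_, h2⟩ | ⟨_, h2⟩
    · exact h2 rfl
    · exact hxt h2
  obtain ⟨l, hl, hpos, s, hform⟩ := hiso y hyL
  refine ⟨l.subst x' t, List.mem_map_of_mem (f := (Lit.subst · x' t)) hl, hpos, s.subst x' t, ?_⟩
  rcases hform with h | h <;>
    simp [Lit.subst, h, Atom.subst, Term.subst, hynx']

/-- One step preserves satisfiability. -/
lemma sat_step {L L' : Conj σ} (h : SubstStep L L') (I : Interp σ) :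
    (∃ ν : ℕ → I.M, SatConj I ν L) ↔ (∃ ν : ℕ → I.M, SatConj I ν L') := by
  rcases h with ⟨x, hx, t, hconj, hdep, rfl⟩
  constructor
  · rintro ⟨ν, hν⟩
    refine ⟨ν, ?_⟩
    rw [SatConj_subst]
    have heq : ν x = t.eval I ν := by
      rcases hconj with ⟨l, hl, hpos, hform⟩
      have := hν l hl
      rcases hform with h | h <;>
        simp [Lit.SatL, hpos, h, Atom.SatA, Term.eval] at this <;>
        simp [this, Term.eval]
    have : updAssign ν x (t.eval I ν) = ν := by
      funext y; by_cases hy : y = x <;> simp [updAssign, hy, ← heq]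
    rwa [this]
  · rintro ⟨ν, hν⟩
    exact ⟨updAssign ν x (t.eval I ν), (SatConj_subst L x t ν).1 hν⟩

/-- Closed conjunctions do not depend on the assignment. -/
lemma sat_closed {L : Conj σ} (hL : conjVars L = ∅) (I : Interp σ)
    (ν₁ ν₂ : ℕ → I.M) : SatConj I ν₁ L ↔ SatConj I ν₂ L := by
  have key : ∀ (μ₁ μ₂ : ℕ → I.M) (l : Lit σ), l ∈ L →
      (l.atom.SatA I μ₁ ↔ l.atom.SatA I μ₂) := by
    intro μ₁ μ₂ l hl
    have hnov : ∀ u, u ∉ l.vars := by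
      intro u hu
      have : u ∈ conjVars L := ⟨l, hl, hu⟩
      simp [hL] at this
    cases hatom : l.atom with
    | eq a b =>
      have ha : a.eval I μ₁ = a.eval I μ₂ :=
        Term.eval_congr a fun z hz => absurd (show z ∈ l.vars by
          simp only [Lit.vars, hatom, Atom.vars, Set.mem_union]; exact Or.inl hz) (hnov z)
      have hb : b.eval I μ₁ = b.eval I μ₂ :=
        Term.eval_congr b fun z hz => absurd (show z ∈ l.vars by
          simp only [Lit.vars, hatom, Atom.vars, Set.mem_union]; exact Or.inr hz) (hnov z)
      simp [Atom.SatA, ha, hb]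
    | pred p ts =>
      have hts : (fun i => (ts i).eval I μ₁) = (fun i => (ts i).eval I μ₂) := by
        funext i
        refine Term.eval_congr _ fun z hz => absurd (show z ∈ l.vars by
          simp only [Lit.vars, hatom, Atom.vars, Set.mem_iUnion]; exact ⟨i, hz⟩) (hnov z)
      simp [Atom.SatA, hts]
  have mp : ∀ (μ₁ μ₂ : ℕ → I.M), SatConj I μ₁ L → SatConj I μ₂ L := by
    intro μ₁ μ₂ h l hl
    have hk := key μ₁ μ₂ l hl
    have := h l hl
    unfold Lit.SatL at this ⊢
    cases hlp : l.pos <;> simp [hlp] at this ⊢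
    · exact fun hc => this (hk.2 hc)
    · exact hk.1 this
  exact ⟨mp ν₁ ν₂, mp ν₂ ν₁⟩

/-- Let `D` be a conjunction of possibly negated atomic formulas such
that every variable occurring in `D` occurs in some non-negated conjunct of the form
`x = t` or `t = x`, and such that the variable dependency graph of `D` is acyclic.
Then the substitution process that, while some variable `x` remains in `D`, selects
a non-negated conjunct `x = t` or `t = x` of `D` such that no variable occurring in
`t` depends on `x` and replaces `D` by `D^x_t`, terminates after finitely many steps
in a formula containing no variables, and the existential closure of `D` is
logically equivalent to the resulting variable-free formula. -/
theorem subst_process_conj {σ : Signature} (D : Conj σ)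
    (hiso : ∀ x ∈ conjVars D, ∃ l ∈ D, isolator x l)
    (hacyc : AcyclicDeps D) :
    -- the process terminates: there is no infinite sequence of substitution steps
    (¬ ∃ g : ℕ → Conj σ, g 0 = D ∧ ∀ n, SubstStep (g n) (g (n + 1))) ∧
    -- progress: as long as a variable remains, a substitution step applies
    (∀ D', Relation.ReflTransGen SubstStep D D' → conjVars D' ≠ ∅ →
      ∃ D'', SubstStep D' D'') ∧
    -- any variable-free result is logically equivalent to the ∃-closure of `D`
    (∀ D', Relation.ReflTransGen SubstStep D D' → conjVars D' = ∅ →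
      ∀ (I : Interp σ) (ν' : ℕ → I.M),
        ((∃ ν : ℕ → I.M, SatConj I ν D) ↔ SatConj I ν' D')) := by
  have inv : ∀ D', Relation.ReflTransGen SubstStep D D' →
      (∀ x ∈ conjVars D', ∃ l ∈ D', isolator x l) ∧ AcyclicDeps D' := by
    intro D' h
    induction h with
    | refl => exact ⟨hiso, hacyc⟩
    | tail _ hstep ih => exact ⟨iso_step hstep ih.1, acyclic_step hstep ih.2⟩
  refine ⟨?_, ?_, ?_⟩
  · rintro ⟨g, hg0, hgs⟩
    have hdec : ∀ n, (conjVars (g (n+1))).ncard < (conjVars (g n)).ncard := by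
      intro n
      obtain ⟨x, hx, hsub⟩ := conjVars_step_subset (hgs n)
      have hfin := conjVars_finite (g n)
      have hss : conjVars (g (n+1)) ⊂ conjVars (g n) := by
        refine ⟨hsub.trans Set.diff_subset, fun hc => ?_⟩
        exact (hsub (hc hx)).2 rfl
      exact Set.ncard_lt_ncard hss hfin
    have mono : ∀ n, (conjVars (g n)).ncard + n ≤ (conjVars (g 0)).ncard := by
      intro n
      induction n with
      | zero => simp
      | succ k ih => have := hdec k; omega
    have := mono ((conjVars (g 0)).ncard + 1)
    omega
  · intro D' hreach hne
    obtain ⟨hiso', hacyc'⟩ := inv D' hreach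
    obtain ⟨x, hx⟩ := Set.nonempty_iff_ne_empty.2 hne
    obtain ⟨l, hl, hpos, t, hform⟩ := hiso' x hx
    refine ⟨conjSubst x t D', x, hx, t, ⟨l, hl, hpos, hform⟩, ?_, rfl⟩
    intro u hu hdep'
    have edge : depEdgeC D' x u := ⟨l, hl, hpos, t, hform, hu⟩
    exact hacyc' x (Relation.TransGen.head edge hdep')
  · intro D' hreach hcl I ν'
    have hsat : ∀ (E : Conj σ), Relation.ReflTransGen SubstStep D E →
        ((∃ ν : ℕ → I.M, SatConj I ν D) ↔ ∃ ν : ℕ → I.M, SatConj I ν E) := by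
      intro E hE
      induction hE with
      | refl => exact Iff.rfl
      | tail _ hstep ih => exact ih.trans (sat_step hstep I)
    rw [hsat D' hreach]
    constructor
    · rintro ⟨ν, hν⟩
      exact (sat_closed hcl I ν ν').1 hν
    · intro h
      exact ⟨ν', h⟩

end ASPMT
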